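/- Let j ∈ ℤ³ with j ≠ 0 and j ≠ e_z, and let w ∈ ℂ³ with w ≠ 0, j·w = 0 (complex bilinear dot product), and e_z·w ≠ 0. Let v ∈ ℂ³ with |v| = 1, w·v = 0 and e_z·v = 0, and define μ := v − ((v·(e_z − j))/|e_z − j|²)·(e_z − j), where |e_z − j|² is the squared Euclidean norm of the integer vector e_z − j. Then μ ≠ 0. -/

import Mathlib

open Complex

/-- The bilinear dot product on ℂ³. -/
noncomputable def cdot (v w : Fin 3 → ℂ) : ℂ := ∑ i, v i * w i

theorem stmt_13 (j : Fin 3 → ℤ) (hj0 : j ≠ 0) (hjez : j ≠ ![0, 0, 1])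
    (w : Fin 3 → ℂ) (hw0 : w ≠ 0)
    (hjw : cdot (fun i => (j i : ℂ)) w = 0)
    (hezw : cdot ![0, 0, 1] w ≠ 0)
    (v : Fin 3 → ℂ) (hvnorm : ∑ i, ‖v i‖ ^ 2 = 1)
    (hwv : cdot w v = 0) (hezv : cdot ![0, 0, 1] v = 0)
    (μ : Fin 3 → ℂ)
    (hμ : μ = v - (cdot v (![0, 0, 1] - fun i => (j i : ℂ))
        / ((∑ i, ((![0, 0, 1] i - j i : ℤ) : ℝ) ^ 2 : ℝ) : ℂ))
      • (![0, 0, 1] - fun i => (j i : ℂ))) :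
    μ ≠ 0 := by
  intro h0
  rw [h0] at hμ
  set u : Fin 3 → ℂ := ![0, 0, 1] - fun i => (j i : ℂ) with hu
  set c : ℂ := cdot v u
        / ((∑ i, ((![0, 0, 1] i - j i : ℤ) : ℝ) ^ 2 : ℝ) : ℂ) with hc
  have hv : v = c • u := by
    have := hμ.symm
    rwa [sub_eq_zero] at this
  clear_value c u
  simp only [cdot, Fin.sum_univ_three] at hjw hezw hwv hezv
  simp only [Matrix.cons_val_zero, Matrix.cons_val_one, Matrix.head_cons] at hjw hezw hwv hezv
  have hw2 : w 2 ≠ 0 := by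
    intro h
    apply hezw
    rw [h]; ring
  have hu0 : u 0 = -(j 0 : ℂ) := by simp [hu, Matrix.vecHead, Matrix.vecTail]
  have hu1 : u 1 = -(j 1 : ℂ) := by simp [hu, Matrix.vecHead, Matrix.vecTail]
  have hu2 : u 2 = 1 - (j 2 : ℂ) := by simp [hu, Matrix.vecHead, Matrix.vecTail]
  have hwu : w 0 * u 0 + w 1 * u 1 + w 2 * u 2 = w 2 := by
    rw [hu0, hu1, hu2]
    linear_combination -hjw
  have hwv' : c * w 2 = 0 := by
    have h0 := congrFun hv 0
    have h1 := congrFun hv 1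
    have h2 := congrFun hv 2
    simp only [Pi.smul_apply, smul_eq_mul] at h0 h1 h2
    calc c * w 2 = w 0 * v 0 + w 1 * v 1 + w 2 * v 2 := by
          rw [h0, h1, h2]; linear_combination -c * hwu
      _ = 0 := hwv
  have hc0 : c = 0 := by
    rcases mul_eq_zero.mp hwv' with h | h
    · exact h
    · exact absurd h hw2
  have hv0 : v = 0 := by
    rw [hv, hc0, zero_smul]
  rw [hv0] at hvnorm
  simp at hvnorm
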